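/- Let F be a field, q ∈ F, and m, s, t ≥ 1 natural numbers, with q + 1 ≠ 0 and Δ := q²(s−1)(t−1) − 1 ≠ 0 in F. Let x̂, d̂ : Fin m → F with d̂(w_m) = 0 (where w_m is the last index of Fin m) and suppose ∑_{i} (1 + q + (q² − 1)·d̂(i))·x̂(i) = q + 1. Index the extended set by I = Fin m ⊕ (Fin (s−1) ⊕ Fin t), fix w₀ : Fin t, and define x : I → F by x(inl i) = x̂(i) for i ≠ w_m, x(inl w_m) = x̂(w_m) + (q(t−1)−1)/((q+1)Δ) − 1, x(inr (inl a)) = (q(t−1)−1)/((q+1)Δ), and x(inr (inr c)) = (q(s−1)−1)/((q+1)Δ); and define d : I → F by d(inl i) = 1 + q·d̂(i), d(inr (inl a)) = 1, d(inr (inr c)) = q + 1 for c ≠ w₀, and d(inr (inr w₀)) = 0. Then ∑_{v ∈ I} (1 + q + (q² − 1)·d(v))·x(v) = q + 1. -/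

import Mathlib

/-- The extension of the special vector `x̂` of a graph `H` (with `m` vertices,
cut vertex `w_m`) to the graph obtained by attaching a leaf block `K_{s,t}`
at `w_m` (a vertex of the `X`-part): the new index set is
`Fin m ⊕ (Fin (s-1) ⊕ Fin t)`, where `Fin (s-1)` indexes the new `X`-vertices
and `Fin t` the new `Y`-vertices.  The scalars `s, t` are cast into `F`. -/
def extXVec (F : Type*) [Field F] (q : F) (s t : ℕ) {m s' t' : ℕ}
    (xh : Fin m → F) (wm : Fin m) : Fin m ⊕ (Fin s' ⊕ Fin t') → F := fun u =>
  match u with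
  | Sum.inl i =>
      if i = wm then
        xh wm + (q * ((t : F) - 1) - 1) /
          ((q + 1) * (q ^ 2 * ((s : F) - 1) * ((t : F) - 1) - 1)) - 1
      else xh i
  | Sum.inr (Sum.inl _) =>
      (q * ((t : F) - 1) - 1) /
        ((q + 1) * (q ^ 2 * ((s : F) - 1) * ((t : F) - 1) - 1))
  | Sum.inr (Sum.inr _) =>
      (q * ((s : F) - 1) - 1) /
        ((q + 1) * (q ^ 2 * ((s : F) - 1) * ((t : F) - 1) - 1))

/-- The column of the `q`-distance matrix of the enlarged graph at the new
`Y`-vertex `w₀`, expressed in terms of the column `d̂` of the `q`-distance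
matrix of `H` at the cut vertex `w_m`. -/
def extDCol (F : Type*) [Field F] (q : F) {m s' t : ℕ}
    (dh : Fin m → F) (w0 : Fin t) : Fin m ⊕ (Fin s' ⊕ Fin t) → F := fun u =>
  match u with
  | Sum.inl i => 1 + q * dh i
  | Sum.inr (Sum.inl _) => 1
  | Sum.inr (Sum.inr c) => if c = w0 then 0 else q + 1

theorem sum_ext_eq_q_add_one (F : Type*) [Field F] (q : F)
    (m s t : ℕ) (hm : 1 ≤ m) (hs : 1 ≤ s) (ht : 1 ≤ t)
    (hq : q + 1 ≠ 0)
    (hΔ : q ^ 2 * ((s : F) - 1) * ((t : F) - 1) - 1 ≠ 0)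
    (xh dh : Fin m → F) (wm : Fin m) (hwm : (wm : ℕ) = m - 1)
    (hdh : dh wm = 0)
    (hsum : ∑ i, (1 + q + (q ^ 2 - 1) * dh i) * xh i = q + 1)
    (w0 : Fin t) :
    ∑ v : Fin m ⊕ (Fin (s - 1) ⊕ Fin t),
        (1 + q + (q ^ 2 - 1) * extDCol F q dh w0 v) * extXVec F q s t xh wm v
      = q + 1 := by
  classical
  have hs1 : ((s - 1 : ℕ) : F) = (s : F) - 1 := by
    rw [Nat.cast_sub hs, Nat.cast_one]
  set A := (q * ((t : F) - 1) - 1) /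
      ((q + 1) * (q ^ 2 * ((s : F) - 1) * ((t : F) - 1) - 1)) with hA
  set B := (q * ((s : F) - 1) - 1) /
      ((q + 1) * (q ^ 2 * ((s : F) - 1) * ((t : F) - 1) - 1)) with hB
  rw [Fintype.sum_sum_type, Fintype.sum_sum_type]
  have e1 : ∑ i : Fin m,
      (1 + q + (q ^ 2 - 1) * extDCol F q dh w0 ((Sum.inl i : Fin m ⊕ (Fin (s-1) ⊕ Fin t)))) *
        extXVec F q s t xh wm ((Sum.inl i : Fin m ⊕ (Fin (s-1) ⊕ Fin t)))
      = q * (q + 1) + q * (q + 1) * (A - 1) := by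
    have key : ∀ i : Fin m,
        (1 + q + (q ^ 2 - 1) * extDCol F q dh w0 ((Sum.inl i : Fin m ⊕ (Fin (s-1) ⊕ Fin t)))) *
          extXVec F q s t xh wm ((Sum.inl i : Fin m ⊕ (Fin (s-1) ⊕ Fin t)))
        = q * ((1 + q + (q ^ 2 - 1) * dh i) * xh i)
          + (if i = wm then q * (q + 1) * (A - 1) else 0) := by
      intro i
      simp only [extDCol, extXVec, ← hA]
      split
      · rename_i h; subst h; rw [hdh]; ring
      · ring
    rw [Finset.sum_congr rfl fun i _ => key i, Finset.sum_add_distrib,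
        ← Finset.mul_sum, hsum, Finset.sum_ite_eq' _ wm]
    simp
  have e2 : ∑ i : Fin (s - 1),
      (1 + q + (q ^ 2 - 1) * extDCol F q dh w0 ((Sum.inr (Sum.inl i) : Fin m ⊕ (Fin (s-1) ⊕ Fin t)))) *
        extXVec F q s t xh wm ((Sum.inr (Sum.inl i) : Fin m ⊕ (Fin (s-1) ⊕ Fin t)))
      = ((s : F) - 1) * (q * (q + 1) * A) := by
    have key : ∀ i : Fin (s - 1),
        (1 + q + (q ^ 2 - 1) * extDCol F q dh w0 ((Sum.inr (Sum.inl i) : Fin m ⊕ (Fin (s-1) ⊕ Fin t)))) *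
          extXVec F q s t xh wm ((Sum.inr (Sum.inl i) : Fin m ⊕ (Fin (s-1) ⊕ Fin t)))
        = q * (q + 1) * A := by
      intro i
      simp only [extDCol, extXVec, ← hA]
      ring
    rw [Finset.sum_congr rfl fun i _ => key i, Finset.sum_const]
    simp [hs1]
  have e3 : ∑ i : Fin t,
      (1 + q + (q ^ 2 - 1) * extDCol F q dh w0 ((Sum.inr (Sum.inr i) : Fin m ⊕ (Fin (s-1) ⊕ Fin t)))) *
        extXVec F q s t xh wm ((Sum.inr (Sum.inr i) : Fin m ⊕ (Fin (s-1) ⊕ Fin t)))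
      = (t : F) * (q ^ 2 * (q + 1) * B) - (q ^ 2 - 1) * (q + 1) * B := by
    have key : ∀ i : Fin t,
        (1 + q + (q ^ 2 - 1) * extDCol F q dh w0 ((Sum.inr (Sum.inr i) : Fin m ⊕ (Fin (s-1) ⊕ Fin t)))) *
          extXVec F q s t xh wm ((Sum.inr (Sum.inr i) : Fin m ⊕ (Fin (s-1) ⊕ Fin t)))
        = q ^ 2 * (q + 1) * B
          - (if i = w0 then (q ^ 2 - 1) * (q + 1) * B else 0) := by
      intro i
      simp only [extDCol, extXVec, ← hB]
      split
      · ring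
      · ring
    rw [Finset.sum_congr rfl fun i _ => key i, Finset.sum_sub_distrib,
        Finset.sum_const, Finset.sum_ite_eq' _ w0]
    simp
  rw [e1, e2, e3, hA, hB]
  have hD : (q + 1) * (q ^ 2 * ((s : F) - 1) * ((t : F) - 1) - 1) ≠ 0 :=
    mul_ne_zero hq hΔ
  generalize hΔd : q ^ 2 * ((s : F) - 1) * ((t : F) - 1) - 1 = D at *
  field_simp
  rw [← hΔd]
  ring
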